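/- Let A ∈ ℝ^{m×N} with rank(A) = m, y ∈ ℝ^m, p ∈ [2,∞) and α > 0. Then for every t ≥ 0, the gradient-flow state ψ_α(t) equals 𝒱_p(A, Aψ_α(t)), i.e., ψ_α(t) is the unique minimizer of Q_p over the affine set {z ∈ ℝ^N : Az = Aψ_α(t)}. -/

import Mathlib

noncomputable section

/-- The Euclidean (ℓ²) norm of a vector in ℝⁿ. -/
def norm2 {n : ℕ} (v : Fin n → ℝ) : ℝ := Real.sqrt (∑ i, v i ^ 2)

/-- The ℓ¹ norm of a vector in ℝⁿ. -/
def norm1 {n : ℕ} (v : Fin n → ℝ) : ℝ := ∑ i, |v i|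

/-- The sup (ℓ^∞) norm of a vector in ℝⁿ. -/
def normInf {n : ℕ} (v : Fin n → ℝ) : ℝ := ⨆ i, |v i|

/-- The ℓʳ (quasi-)norm ‖v‖_r = (∑ |v i|^r)^(1/r). -/
def normr {n : ℕ} (r : ℝ) (v : Fin n → ℝ) : ℝ := (∑ i, |v i| ^ r) ^ (1 / r)

/-- The smallest singular value of `A`, via `σ_min(A) = inf {‖Aᵀ z‖₂ : ‖z‖₂ = 1}`. -/
def sigmaMin {m N : ℕ} (A : Matrix (Fin m) (Fin N) ℝ) : ℝ :=
  sInf {c : ℝ | ∃ z : Fin m → ℝ, norm2 z = 1 ∧ c = norm2 (A.transpose.mulVec z)}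

/-- The entropy H(z) = −∑ |z i| ln |z i| (with the convention 0 · ln 0 = 0,
which holds automatically since `Real.log 0 = 0`). -/
def Hent {n : ℕ} (z : Fin n → ℝ) : ℝ := -∑ i, |z i| * Real.log |z i|

/-- The set 𝒰(A,y) of basis-pursuit minimizers: minimizers of ‖·‖₁ subject to Az = y. -/
def BPset {m N : ℕ} (A : Matrix (Fin m) (Fin N) ℝ) (y : Fin m → ℝ) : Set (Fin N → ℝ) :=
  {z | A.mulVec z = y ∧ ∀ w : Fin N → ℝ, A.mulVec w = y → norm1 z ≤ norm1 w}

/-- The basis-pursuit minimum value R(A,y) = min {‖z‖₁ : Az = y}. -/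
def Rmin {m N : ℕ} (A : Matrix (Fin m) (Fin N) ℝ) (y : Fin m → ℝ) : ℝ :=
  sInf (norm1 '' {z : Fin N → ℝ | A.mulVec z = y})

/-- The function h_p: h₂(t) = 2 sinh t, and for p > 2,
h_p(t) = (1−t)^{−p/(p−2)} − (1+t)^{−p/(p−2)}. -/
def hfun (p t : ℝ) : ℝ :=
  if p = 2 then 2 * Real.sinh t
  else (1 - t) ^ (-(p / (p - 2))) - (1 + t) ^ (-(p / (p - 2)))

/-- The natural domain of h_p: all of ℝ when p = 2, and (−1,1) when p > 2. -/
def hDomain (p : ℝ) : Set ℝ := if p = 2 then Set.univ else Set.Ioo (-1) 1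

/-- The inverse h_p^{-1} : ℝ → ℝ of h_p (h_p is a strictly increasing bijection
from its domain onto ℝ). -/
def hInv (p u : ℝ) : ℝ := Function.invFunOn (hfun p) (hDomain p) u

/-- q_p(u) = ∫₀ᵘ h_p^{−1}(v) dv. -/
def qfun (p u : ℝ) : ℝ := ∫ v in (0:ℝ)..u, hInv p v

/-- Q_p(z) = α^p ∑ q_p(z i / α^p). -/
def Qfun {n : ℕ} (p α : ℝ) (z : Fin n → ℝ) : ℝ := α ^ p * ∑ i, qfun p (z i / α ^ p)

/-- g_p: g₂(u) = |u| ln(|u|/e) (with g₂(0) = 0), and for p > 2,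
g_p(u) = |u| − (p/2)|u|^{2/p}. -/
def gfun (p u : ℝ) : ℝ :=
  if p = 2 then (if u = 0 then 0 else |u| * Real.log (|u| / Real.exp 1))
  else |u| - p / 2 * |u| ^ (2 / p)

/-- G_p(z) = α^p ∑ g_p(z i / α^p). -/
def Gfun {n : ℕ} (p α : ℝ) (z : Fin n → ℝ) : ℝ := α ^ p * ∑ i, gfun p (z i / α ^ p)

/-- The predictor ψ_θ = θ₊^p − θ₋^p (componentwise powers), for a parameter vector
θ = (θ₊, θ₋) ∈ ℝ^{2N}. -/
def psiOf {N : ℕ} (p : ℝ) (θ : EuclideanSpace ℝ (Fin N ⊕ Fin N)) : Fin N → ℝ :=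
  fun i => θ (Sum.inl i) ^ p - θ (Sum.inr i) ^ p

/-- The squared loss L(θ) = (1/2)‖A ψ_θ − y‖₂². -/
def lossFun {m N : ℕ} (A : Matrix (Fin m) (Fin N) ℝ) (y : Fin m → ℝ) (p : ℝ)
    (θ : EuclideanSpace ℝ (Fin N ⊕ Fin N)) : ℝ :=
  (1 / 2) * ∑ j, (A.mulVec (psiOf p θ) j - y j) ^ 2

end
noncomputable section
open Real Set

namespace Stmt4Aux

variable {p : ℝ}

lemma hfun_odd (t : ℝ) : hfun p (-t) = -(hfun p t) := by
  unfold hfun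
  split
  · simp [Real.sinh_neg]
  · rw [show (1:ℝ) - -t = 1 + t by ring, show (1:ℝ) + -t = 1 - t by ring]
    ring

lemma hfun_strictMonoOn (hp : 2 ≤ p) : StrictMonoOn (hfun p) (hDomain p) := by
  rcases eq_or_lt_of_le hp with h2 | h2
  · subst h2
    intro a _ b _ hab
    simp only [hfun, eq_self_iff_true, if_true]
    have := Real.sinh_lt_sinh.2 hab
    linarith
  · have hγ : 0 < p / (p - 2) := div_pos (by linarith) (by linarith)
    intro a ha b hb hab
    rw [hDomain, if_neg (by linarith : ¬ p = 2)] at ha hb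
    simp only [hfun, if_neg (by linarith : ¬ p = 2)]
    have h1 : (0:ℝ) < 1 - b := by linarith [hb.2]
    have h2' : (0:ℝ) < 1 + a := by linarith [ha.1]
    have l1 : (1 - a) ^ (-(p / (p - 2))) < (1 - b) ^ (-(p / (p - 2))) :=
      Real.rpow_lt_rpow_of_neg h1 (by linarith) (by linarith)
    have l2 : (1 + b) ^ (-(p / (p - 2))) < (1 + a) ^ (-(p / (p - 2))) :=
      Real.rpow_lt_rpow_of_neg h2' (by linarith) (by linarith)
    linarith

lemma hfun_continuousOn (hp : 2 ≤ p) : ContinuousOn (hfun p) (hDomain p) := by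
  rcases eq_or_lt_of_le hp with h2 | h2
  · subst h2
    have : hfun 2 = fun t => 2 * Real.sinh t := by
      funext t; simp [hfun]
    rw [this]
    exact (continuous_const.mul Real.continuous_sinh).continuousOn
  · have hne : ¬ p = 2 := by linarith
    have : ∀ t ∈ hDomain p, hfun p t
        = (1 - t) ^ (-(p / (p - 2))) - (1 + t) ^ (-(p / (p - 2))) := by
      intro t _; simp [hfun, hne]
    refine ContinuousOn.congr ?_ this
    rw [hDomain, if_neg hne]
    refine ContinuousOn.sub ?_ ?_
    · refine ContinuousOn.rpow_const ((continuous_const.sub continuous_id).continuousOn) ?_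
      intro x hx
      refine Or.inl ?_
      have : x < 1 := hx.2
      intro h; linarith
    · refine ContinuousOn.rpow_const ((continuous_const.add continuous_id).continuousOn) ?_
      intro x hx
      refine Or.inl ?_
      have : -1 < x := hx.1
      intro h; linarith

lemma hfun_ge_of_gt (h2 : 2 < p) (u : ℝ) :
    ∃ b ∈ Set.Ioo (0:ℝ) 1, u ≤ hfun p b := by
  have hne : ¬ p = 2 := by linarith
  set γ := p / (p - 2) with hγdef
  have hγ : 0 < γ := div_pos (by linarith) (by linarith)
  set M := |u| + 1 with hM
  have hM1 : 1 ≤ M := by have := abs_nonneg u; linarith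
  set ε := (M + 1) ^ (-γ⁻¹) with hε
  have hεpos : 0 < ε := Real.rpow_pos_of_pos (by linarith) _
  have hεlt : ε < 1 :=
    Real.rpow_lt_one_of_one_lt_of_neg (by linarith) (by simp [neg_neg]; positivity)
  refine ⟨1 - ε, ⟨by linarith, by linarith⟩, ?_⟩
  have key : ε ^ (-γ) = M + 1 := by
    have h1 : (-γ⁻¹) * (-γ) = 1 := by field_simp
    rw [hε, ← Real.rpow_mul (by linarith), h1, Real.rpow_one]
  have h2e : (1:ℝ) ≤ 2 - ε := by linarith
  have hb : (2 - ε) ^ (-γ) ≤ 1 :=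
    Real.rpow_le_one_of_one_le_of_nonpos h2e (by linarith)
  have : hfun p (1 - ε) = ε ^ (-γ) - (2 - ε) ^ (-γ) := by
    simp only [hfun, if_neg hne, ← hγdef]
    rw [show (1:ℝ) - (1 - ε) = ε by ring, show (1:ℝ) + (1 - ε) = 2 - ε by ring]
  rw [this, key]
  have : u ≤ M := by rw [hM]; have := le_abs_self u; linarith
  linarith

end Stmt4Aux
noncomputable section
open Real Set

namespace Stmt4Aux

variable {p : ℝ}

lemma hfun_surj (hp : 2 ≤ p) (u : ℝ) : ∃ s ∈ hDomain p, hfun p s = u := by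
  rcases eq_or_lt_of_le hp with h2 | h2
  · subst h2
    refine ⟨Real.arsinh (u / 2), ?_, ?_⟩
    · rw [hDomain, if_pos rfl]; trivial
    · simp [hfun, Real.sinh_arsinh]; ring
  · have hne : ¬ p = 2 := by linarith
    obtain ⟨b, hb, hub⟩ := hfun_ge_of_gt h2 (|u| + 1)
    have hdom : hDomain p = Set.Ioo (-1:ℝ) 1 := by rw [hDomain, if_neg hne]
    have hIcc : Set.Icc (-b) b ⊆ hDomain p := by
      rw [hdom]; intro x hx
      exact ⟨by linarith [hx.1, hb.2], by linarith [hx.2, hb.2]⟩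
    have hmb : -b ≤ b := by linarith [hb.1]
    have hcont : ContinuousOn (hfun p) (Set.Icc (-b) b) :=
      (hfun_continuousOn hp).mono hIcc
    have hmem : u ∈ Set.Icc (hfun p (-b)) (hfun p b) := by
      rw [hfun_odd]
      constructor
      · have := le_abs_self (-u); simp at this; linarith
      · have := le_abs_self u; linarith
    obtain ⟨s, hs, hsu⟩ := intermediate_value_Icc hmb hcont hmem
    exact ⟨s, hIcc hs, hsu⟩

lemma hInv_mem (hp : 2 ≤ p) (u : ℝ) : hInv p u ∈ hDomain p :=
  Function.invFunOn_mem (hfun_surj hp u)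

lemma hfun_hInv (hp : 2 ≤ p) (u : ℝ) : hfun p (hInv p u) = u :=
  Function.invFunOn_eq (hfun_surj hp u)

lemma hInv_hfun (hp : 2 ≤ p) {s : ℝ} (hs : s ∈ hDomain p) : hInv p (hfun p s) = s :=
  (hfun_strictMonoOn hp).injOn.leftInvOn_invFunOn hs

lemma hInv_strictMono (hp : 2 ≤ p) : StrictMono (hInv p) := by
  intro u v huv
  by_contra h
  push_neg at h
  have := (hfun_strictMonoOn hp).monotoneOn (hInv_mem hp v) (hInv_mem hp u) h
  rw [hfun_hInv hp, hfun_hInv hp] at this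
  linarith

/-- Lower bound for integrals of a strictly monotone function. -/
lemma integral_strict_lower {g : ℝ → ℝ} (hg : StrictMono g) (a b : ℝ) :
    g a * (b - a) ≤ ∫ v in a..b, g v ∧ (a ≠ b → g a * (b - a) < ∫ v in a..b, g v) := by
  have hint : ∀ x y : ℝ, IntervalIntegrable g MeasureTheory.volume x y :=
    fun x y => hg.monotone.intervalIntegrable
  rcases lt_trichotomy a b with hab | hab | hab
  · set c := (a + b) / 2 with hc
    have hac : a < c := by rw [hc]; linarith
    have hcb : c < b := by rw [hc]; linarith
    have e1 : (∫ v in a..b, g v) = (∫ v in a..c, g v) + ∫ v in c..b, g v :=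
      (intervalIntegral.integral_add_adjacent_intervals (hint a c) (hint c b)).symm
    have l1 : g a * (c - a) ≤ ∫ v in a..c, g v := by
      have := intervalIntegral.integral_mono_on hac.le
        (intervalIntegrable_const (c := g a)) (hint a c)
        (fun x hx => hg.monotone hx.1)
      simpa [smul_eq_mul, mul_comm] using this
    have l2 : g c * (b - c) ≤ ∫ v in c..b, g v := by
      have := intervalIntegral.integral_mono_on hcb.le
        (intervalIntegrable_const (c := g c)) (hint c b)
        (fun x hx => hg.monotone hx.1)
      simpa [smul_eq_mul, mul_comm] using this
    have hgc : g a < g c := hg hac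
    constructor
    · nlinarith
    · intro _; nlinarith
  · subst hab
    simp
  · -- b < a
    set c := (a + b) / 2 with hc
    have hbc : b < c := by rw [hc]; linarith
    have hca : c < a := by rw [hc]; linarith
    have e0 : (∫ v in a..b, g v) = - ∫ v in b..a, g v := intervalIntegral.integral_symm b a
    have e1 : (∫ v in b..a, g v) = (∫ v in b..c, g v) + ∫ v in c..a, g v :=
      (intervalIntegral.integral_add_adjacent_intervals (hint b c) (hint c a)).symm
    have l1 : (∫ v in b..c, g v) ≤ g c * (c - b) := by
      have := intervalIntegral.integral_mono_on hbc.le (hint b c)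
        (intervalIntegrable_const (c := g c))
        (fun x hx => hg.monotone hx.2)
      simpa [smul_eq_mul, mul_comm] using this
    have l2 : (∫ v in c..a, g v) ≤ g a * (a - c) := by
      have := intervalIntegral.integral_mono_on hca.le (hint c a)
        (intervalIntegrable_const (c := g a))
        (fun x hx => hg.monotone hx.2)
      simpa [smul_eq_mul, mul_comm] using this
    have hgc : g c < g a := hg hca
    constructor
    · nlinarith
    · intro _; nlinarith

lemma qfun_sub (hp : 2 ≤ p) (a b : ℝ) :
    qfun p b - qfun p a = ∫ v in a..b, hInv p v := by
  unfold qfun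
  exact intervalIntegral.integral_interval_sub_left
    (hInv_strictMono hp).monotone.intervalIntegrable
    (hInv_strictMono hp).monotone.intervalIntegrable

lemma qfun_bregman (hp : 2 ≤ p) (a b : ℝ) :
    hInv p a * (b - a) ≤ qfun p b - qfun p a
      ∧ (b ≠ a → hInv p a * (b - a) < qfun p b - qfun p a) := by
  rw [qfun_sub hp]
  have h := integral_strict_lower (hInv_strictMono hp) a b
  exact ⟨h.1, fun hne => h.2 (Ne.symm hne)⟩

end Stmt4Aux
noncomputable section
namespace Stmt4Aux
open Real Set

lemma hasDerivAt_intg {c : ℝ → ℝ} (hc : Continuous c) (t : ℝ) :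
    HasDerivAt (fun s => ∫ v in (0:ℝ)..s, c v) (c t) t :=
  intervalIntegral.integral_hasDerivAt_right (hc.intervalIntegrable 0 t)
    (hc.stronglyMeasurableAtFilter _ _) hc.continuousAt

lemma cont_intg {c : ℝ → ℝ} (hc : Continuous c) :
    Continuous (fun s => ∫ v in (0:ℝ)..s, c v) :=
  continuous_iff_continuousAt.2 fun x => (hasDerivAt_intg hc x).continuousAt

lemma ode_exp {f c : ℝ → ℝ} {α : ℝ} (hc : Continuous c)
    (hf : ∀ t ∈ Set.Ici (0:ℝ), HasDerivWithinAt f (c t * f t) (Set.Ici 0) t)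
    (h0 : f 0 = α) :
    ∀ t ∈ Set.Ici (0:ℝ), f t = α * Real.exp (∫ s in (0:ℝ)..t, c s) := by
  intro b hb
  set I := fun s => ∫ v in (0:ℝ)..s, c v with hI
  have hg : ∀ x ∈ Set.Ico (0:ℝ) b,
      HasDerivWithinAt (fun s => f s * Real.exp (-(I s))) 0 (Set.Ici x) x := by
    intro x hx
    have hder : HasDerivWithinAt f (c x * f x) (Set.Ici x) x :=
      (hf x hx.1).mono (Set.Ici_subset_Ici.2 hx.1)
    have hIe : HasDerivWithinAt (fun s => Real.exp (-(I s)))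
        (Real.exp (-(I x)) * (-(c x))) (Set.Ici x) x :=
      (((hasDerivAt_intg hc x).neg).exp).hasDerivWithinAt
    have := hder.fun_mul hIe
    rw [show c x * f x * Real.exp (-(I x)) + f x * (Real.exp (-(I x)) * (-(c x))) = 0 by ring] at this
    exact this
  have hfc : ContinuousOn f (Set.Ici 0) := fun x hx => (hf x hx).continuousWithinAt
  have hgc : ContinuousOn (fun s => f s * Real.exp (-(I s))) (Set.Icc 0 b) :=
    (hfc.mono Set.Icc_subset_Ici_self).mul
      (((cont_intg hc).neg.rexp).continuousOn)
  have hconst := constant_of_has_deriv_right_zero hgc hg b (Set.right_mem_Icc.2 hb)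
  have hI0 : I 0 = 0 := intervalIntegral.integral_same
  rw [hI0, h0] at hconst
  simp only [neg_zero, Real.exp_zero, mul_one] at hconst
  have h1 := congrArg (fun z => z * Real.exp (I b)) hconst
  rwa [mul_assoc, ← Real.exp_add, neg_add_cancel, Real.exp_zero, mul_one] at h1

lemma ode_affine {f c : ℝ → ℝ} (hc : Continuous c)
    (hf : ∀ t ∈ Set.Ici (0:ℝ), HasDerivWithinAt f (c t) (Set.Ici 0) t) :
    ∀ t ∈ Set.Ici (0:ℝ), f t = f 0 + ∫ s in (0:ℝ)..t, c s := by
  intro b hb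
  set I := fun s => ∫ v in (0:ℝ)..s, c v with hI
  have hg : ∀ x ∈ Set.Ico (0:ℝ) b,
      HasDerivWithinAt (fun s => f s - I s) 0 (Set.Ici x) x := by
    intro x hx
    have hder : HasDerivWithinAt f (c x) (Set.Ici x) x :=
      (hf x hx.1).mono (Set.Ici_subset_Ici.2 hx.1)
    have h2 := hder.fun_sub (hasDerivAt_intg hc x).hasDerivWithinAt
    rw [sub_self] at h2
    exact h2
  have hfc : ContinuousOn f (Set.Ici 0) := fun x hx => (hf x hx).continuousWithinAt
  have hgc : ContinuousOn (fun s => f s - I s) (Set.Icc 0 b) :=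
    (hfc.mono Set.Icc_subset_Ici_self).sub ((cont_intg hc).continuousOn)
  have hconst := constant_of_has_deriv_right_zero hgc hg b (Set.right_mem_Icc.2 hb)
  have hI0 : I 0 = 0 := intervalIntegral.integral_same
  rw [hI0, sub_zero] at hconst
  linarith [hconst]

lemma rpow_split {p : ℝ} (hp : 2 ≤ p) (x : ℝ) : x ^ (p - 1) = x ^ (p - 2) * x := by
  rcases eq_or_ne x 0 with rfl | hx
  · rw [Real.zero_rpow (by intro h; linarith : p - 1 ≠ 0), mul_zero]
  · have := Real.rpow_add_one hx (p - 2)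
    rw [show p - 2 + 1 = p - 1 by ring] at this
    rw [this]

lemma cont_rpow_pm2 {p : ℝ} (hp : 2 ≤ p) : Continuous (fun x : ℝ => x ^ (p - 2)) := by
  rcases eq_or_lt_of_le hp with h2 | h2
  · subst h2
    simp only [sub_self, Real.rpow_zero]
    exact continuous_const
  · exact continuous_iff_continuousAt.2 fun x =>
      Real.continuousAt_rpow_const x _ (Or.inr (by linarith))

end Stmt4Aux
noncomputable section
namespace Stmt4Aux
open Real Set

lemma loss_hasGradient {m N : ℕ} (A : Matrix (Fin m) (Fin N) ℝ) (y : Fin m → ℝ) {p : ℝ}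
    (hp : 2 ≤ p) (x : EuclideanSpace ℝ (Fin N ⊕ Fin N)) :
    HasGradientAt (lossFun A y p)
      (WithLp.toLp 2 (fun k => Sum.elim
          (fun i => p * x (Sum.inl i) ^ (p - 1) * ∑ j, A j i * (A.mulVec (psiOf p x) j - y j))
          (fun i => -(p * x (Sum.inr i) ^ (p - 1) * ∑ j, A j i * (A.mulVec (psiOf p x) j - y j)))
          k) : EuclideanSpace ℝ (Fin N ⊕ Fin N)) x := by
  classical
  have hp1 : 1 ≤ p := by linarith
  rw [hasGradientAt_iff_hasFDerivAt]
  have hcoord : ∀ k : Fin N ⊕ Fin N,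
      HasFDerivAt (fun θ : EuclideanSpace ℝ (Fin N ⊕ Fin N) => θ k ^ p)
        ((p * x k ^ (p - 1)) • (PiLp.proj (𝕜 := ℝ) 2 (fun _ : Fin N ⊕ Fin N => ℝ) k)) x := fun k => by
    have := (Real.hasDerivAt_rpow_const (p := p) (x := x k) (Or.inr hp1)).comp_hasFDerivAt x
      (PiLp.proj (𝕜 := ℝ) 2 (fun _ : Fin N ⊕ Fin N => ℝ) k).hasFDerivAt
    exact this
  set D : Fin N → (EuclideanSpace ℝ (Fin N ⊕ Fin N) →L[ℝ] ℝ) := fun i =>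
    (p * x (Sum.inl i) ^ (p - 1)) • (PiLp.proj (𝕜 := ℝ) 2 (fun _ : Fin N ⊕ Fin N => ℝ) (Sum.inl i))
      - (p * x (Sum.inr i) ^ (p - 1)) • (PiLp.proj (𝕜 := ℝ) 2 (fun _ : Fin N ⊕ Fin N => ℝ) (Sum.inr i))
    with hD
  have hψ : ∀ i : Fin N,
      HasFDerivAt (fun θ : EuclideanSpace ℝ (Fin N ⊕ Fin N) => psiOf p θ i) (D i) x :=
    fun i => (hcoord (Sum.inl i)).sub (hcoord (Sum.inr i))
  have hL : lossFun A y p = fun θ : EuclideanSpace ℝ (Fin N ⊕ Fin N) =>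
      (1/2 : ℝ) * ∑ j, ((∑ i, A j i * psiOf p θ i) - y j) ^ 2 := by
    funext θ
    simp [lossFun, Matrix.mulVec, dotProduct]
  rw [hL]
  set r : Fin m → ℝ := fun j => (∑ i, A j i * psiOf p x i) - y j with hr
  have hsq : ∀ j : Fin m, HasFDerivAt
      (fun θ : EuclideanSpace ℝ (Fin N ⊕ Fin N) => ((∑ i, A j i * psiOf p θ i) - y j) ^ 2)
      (((2:ℝ) * r j) • (∑ i, A j i • D i)) x := by
    intro j
    have h1 : HasFDerivAt
        (fun θ : EuclideanSpace ℝ (Fin N ⊕ Fin N) => (∑ i, A j i * psiOf p θ i) - y j)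
        (∑ i, A j i • D i) x :=
      (HasFDerivAt.fun_sum (fun i _ => (hψ i).const_mul (A j i))).sub_const (y j)
    have h2 := (hasDerivAt_pow 2 (r j)).comp_hasFDerivAt x h1
    norm_num at h2
    exact h2
  have htot := (HasFDerivAt.fun_sum (fun j (_ : j ∈ Finset.univ) => hsq j)).const_mul (1/2 : ℝ)
  refine htot.congr_fderiv ?_
  apply ContinuousLinearMap.ext
  intro v
  symm
  have hmv : ∀ j, A.mulVec (psiOf p x) j = ∑ i, A j i * psiOf p x i := by
    intro j; simp [Matrix.mulVec, dotProduct]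
  simp only [InnerProductSpace.toDual_apply_apply, PiLp.inner_apply, RCLike.inner_apply',
    starRingEnd_apply, star_trivial, ContinuousLinearMap.smul_apply,
    ContinuousLinearMap.sum_apply, ContinuousLinearMap.sub_apply, hD,
    PiLp.proj_apply, smul_eq_mul, hmv]
  rw [Fintype.sum_sum_type]
  have key : ∀ i : Fin N,
      Sum.elim
        (fun i => p * x (Sum.inl i) ^ (p - 1) * ∑ j, A j i * r j)
        (fun i => -(p * x (Sum.inr i) ^ (p - 1) * ∑ j, A j i * r j)) (Sum.inl i) * v (Sum.inl i)
      + Sum.elim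
        (fun i => p * x (Sum.inl i) ^ (p - 1) * ∑ j, A j i * r j)
        (fun i => -(p * x (Sum.inr i) ^ (p - 1) * ∑ j, A j i * r j)) (Sum.inr i) * v (Sum.inr i)
      = ∑ j, (A j i * r j * (p * x (Sum.inl i) ^ (p - 1) * v (Sum.inl i))
          - A j i * r j * (p * x (Sum.inr i) ^ (p - 1) * v (Sum.inr i))) := by
    intro i
    rw [Finset.sum_sub_distrib]
    simp only [Sum.elim_inl, Sum.elim_inr]
    rw [show (∑ j, A j i * r j * (p * x (Sum.inl i) ^ (p - 1) * v (Sum.inl i)))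
          = (∑ j, A j i * r j) * (p * x (Sum.inl i) ^ (p - 1) * v (Sum.inl i)) from
        (Finset.sum_mul _ _ _).symm]
    rw [show (∑ j, A j i * r j * (p * x (Sum.inr i) ^ (p - 1) * v (Sum.inr i)))
          = (∑ j, A j i * r j) * (p * x (Sum.inr i) ^ (p - 1) * v (Sum.inr i)) from
        (Finset.sum_mul _ _ _).symm]
    ring
  rw [← Finset.sum_add_distrib]
  calc (∑ i : Fin N, _) = ∑ i : Fin N, ∑ j,
        (A j i * r j * (p * x (Sum.inl i) ^ (p - 1) * v (Sum.inl i))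
          - A j i * r j * (p * x (Sum.inr i) ^ (p - 1) * v (Sum.inr i))) :=
      Finset.sum_congr rfl (fun i _ => key i)
    _ = ∑ j, ∑ i : Fin N,
        (A j i * r j * (p * x (Sum.inl i) ^ (p - 1) * v (Sum.inl i))
          - A j i * r j * (p * x (Sum.inr i) ^ (p - 1) * v (Sum.inr i))) :=
      Finset.sum_comm
    _ = ∑ j, 1/2 * (2 * r j * ∑ i,
          A j i * (p * x (Sum.inl i) ^ (p - 1) * v (Sum.inl i)
            - p * x (Sum.inr i) ^ (p - 1) * v (Sum.inr i))) := by
      refine Finset.sum_congr rfl (fun j _ => ?_)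
      rw [Finset.mul_sum, Finset.mul_sum]
      refine Finset.sum_congr rfl (fun i _ => ?_)
      ring
    _ = 1 / 2 * ∑ j, (2 * r j * ∑ i,
          A j i * (p * x (Sum.inl i) ^ (p - 1) * v (Sum.inl i)
            - p * x (Sum.inr i) ^ (p - 1) * v (Sum.inr i))) := (Finset.mul_sum _ _ _).symm

end Stmt4Aux
noncomputable section
namespace Stmt4Aux
open Real Set

lemma cont_rpow_of_nonneg {e : ℝ} (he : 0 ≤ e) : Continuous (fun x : ℝ => x ^ e) :=
  continuous_iff_continuousAt.2 fun x => Real.continuousAt_rpow_const x _ (Or.inr he)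

lemma coord_pow {p α : ℝ} (hp : 2 ≤ p) (hα : 0 < α) {f C : ℝ → ℝ}
    (hfc : Continuous f) (hC : Continuous C) (h0 : f 0 = α)
    (hf : ∀ t ∈ Set.Ici (0:ℝ), HasDerivWithinAt f (-(p * f t ^ (p - 1) * C t)) (Set.Ici 0) t)
    {t : ℝ} (ht : t ∈ Set.Ici (0:ℝ)) :
    (0 < f t) ∧
    (p = 2 → f t ^ p = α ^ p * Real.exp (-(4 * ∫ s in (0:ℝ)..t, C s))) ∧
    (2 < p → 0 < 1 + p * (p - 2) * α ^ (p - 2) * (∫ s in (0:ℝ)..t, C s) ∧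
      f t ^ p = α ^ p *
        (1 + p * (p - 2) * α ^ (p - 2) * (∫ s in (0:ℝ)..t, C s)) ^ (-(p / (p - 2)))) := by
  set c : ℝ → ℝ := fun s => -(p * f s ^ (p - 2) * C s) with hc
  have hcc : Continuous c := ((continuous_const.mul ((cont_rpow_pm2 hp).comp hfc)).mul hC).neg
  have hf' : ∀ τ ∈ Set.Ici (0:ℝ), HasDerivWithinAt f (c τ * f τ) (Set.Ici 0) τ := by
    intro τ hτ
    have h1 := hf τ hτ
    have h2 : -(p * f τ ^ (p - 1) * C τ) = c τ * f τ := by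
      rw [hc, rpow_split hp]; ring
    rwa [h2] at h1
  have hsol := ode_exp hcc hf' h0
  have hpos : ∀ τ ∈ Set.Ici (0:ℝ), 0 < f τ := by
    intro τ hτ
    rw [hsol τ hτ]
    positivity
  refine ⟨hpos t ht, ?_, ?_⟩
  · -- p = 2
    rintro rfl
    have hceq : c = fun s => (-2) * C s := by
      funext s
      rw [hc]
      norm_num
    have hu : (∫ s in (0:ℝ)..t, c s) = (-2) * ∫ s in (0:ℝ)..t, C s := by
      rw [hceq, intervalIntegral.integral_const_mul]
    have hft : f t = α * Real.exp ((-2) * ∫ s in (0:ℝ)..t, C s) := by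
      rw [hsol t ht, hu]
    rw [hft]
    rw [show ((2:ℝ)) = ((2:ℕ):ℝ) by norm_num, Real.rpow_natCast, Real.rpow_natCast]
    rw [mul_pow, sq (Real.exp _), ← Real.exp_add]
    ring_nf
  · -- 2 < p
    intro h2
    have h2p : (2:ℝ) - p ≠ 0 := by intro h; linarith
    have hp2 : p - 2 ≠ 0 := by intro h; linarith
    set u := ∫ s in (0:ℝ)..t, C s with hu
    set φ : ℝ → ℝ := fun s => f s ^ (2 - p) with hφ
    have hφd : ∀ τ ∈ Set.Ici (0:ℝ), HasDerivWithinAt φ (p * (p - 2) * C τ) (Set.Ici 0) τ := by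
      intro τ hτ
      have h1 := (Real.hasDerivAt_rpow_const (x := f τ) (p := 2 - p)
        (Or.inl (hpos τ hτ).ne')).comp_hasDerivWithinAt τ (hf τ hτ)
      have hmul : f τ ^ (2 - p - 1) * f τ ^ (p - 1) = 1 := by
        rw [← Real.rpow_add (hpos τ hτ), show 2 - p - 1 + (p - 1) = 0 by ring, Real.rpow_zero]
      have h3 : (2 - p) * f τ ^ (2 - p - 1) * -(p * f τ ^ (p - 1) * C τ)
          = p * (p - 2) * C τ := by
        linear_combination (p * (p - 2) * C τ) * hmul
      rw [← h3]
      exact h1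
    have hφsol := ode_affine (c := fun s => p * (p - 2) * C s) (continuous_const.mul hC) hφd t ht
    rw [intervalIntegral.integral_const_mul] at hφsol
    have hφ0 : φ 0 = α ^ (2 - p) := by rw [hφ]; simp only [h0]
    have hcancel : α ^ (2 - p) * α ^ (p - 2) = 1 := by
      rw [← Real.rpow_add hα, show 2 - p + (p - 2) = 0 by ring, Real.rpow_zero]
    have hfactor : α ^ (2 - p) * (1 + p * (p - 2) * α ^ (p - 2) * u) = φ t := by
      rw [hφsol, hφ0]
      linear_combination (p * (p - 2) * u) * hcancel
    have hα2p : (0:ℝ) < α ^ (2 - p) := Real.rpow_pos_of_pos hα _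
    have hφpos : 0 < φ t := Real.rpow_pos_of_pos (hpos t ht) _
    have hXpos : 0 < 1 + p * (p - 2) * α ^ (p - 2) * u := by nlinarith
    refine ⟨hXpos, ?_⟩
    have e1 : f t ^ p = (f t ^ (2 - p)) ^ (p / (2 - p)) := by
      rw [← Real.rpow_mul (hpos t ht).le]
      congr 1
      field_simp
    rw [e1]
    have : f t ^ (2 - p) = α ^ (2 - p) * (1 + p * (p - 2) * α ^ (p - 2) * u) := hfactor.symm
    rw [this, Real.mul_rpow hα2p.le hXpos.le]
    have e2 : (α ^ (2 - p)) ^ (p / (2 - p)) = α ^ p := by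
      rw [← Real.rpow_mul hα.le]
      congr 1
      field_simp
    rw [e2]
    congr 1
    rw [show (2:ℝ) - p = -(p - 2) by ring, div_neg]

end Stmt4Aux

open Stmt4Aux in
/-- Lemma `Apsi_determines_psi`: for every t ≥ 0 the gradient-flow
state ψ_α(t) equals 𝒱_p(A, Aψ_α(t)), i.e. it is the unique minimizer of Q_p over
the affine set {z : Az = Aψ_α(t)}. -/
theorem stmt4 (m N : ℕ) (hm : 1 ≤ m) (hmN : m < N)
    (A : Matrix (Fin m) (Fin N) ℝ) (hA : A.rank = m)
    (y : Fin m → ℝ) (p : ℝ) (hp : 2 ≤ p) (α : ℝ) (hα : 0 < α)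
    (θ : ℝ → EuclideanSpace ℝ (Fin N ⊕ Fin N))
    (hθ0 : ∀ i : Fin N ⊕ Fin N, θ 0 i = α)
    (hflow : ∀ t : ℝ, 0 ≤ t →
      HasDerivWithinAt θ (-gradient (lossFun A y p) (θ t)) (Set.Ici 0) t)
    (t : ℝ) (htt : 0 ≤ t) :
    (∀ z : Fin N → ℝ, A.mulVec z = A.mulVec (psiOf p (θ t)) →
        Qfun p α (psiOf p (θ t)) ≤ Qfun p α z) ∧
    (∀ z : Fin N → ℝ, A.mulVec z = A.mulVec (psiOf p (θ t)) →
        Qfun p α z ≤ Qfun p α (psiOf p (θ t)) → z = psiOf p (θ t)) := by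
  classical
  have htt' : t ∈ Set.Ici (0:ℝ) := htt
  have hae : (0:ℝ) < α ^ p := Real.rpow_pos_of_pos hα p
  set θc : ℝ → EuclideanSpace ℝ (Fin N ⊕ Fin N) := fun s => θ (max s 0) with hθcdef
  have hθceq : ∀ s : ℝ, 0 ≤ s → θc s = θ s := fun s hs => by
    rw [hθcdef]; simp [max_eq_left hs]
  have hθcont : ContinuousOn θ (Set.Ici 0) := fun s hs => (hflow s hs).continuousWithinAt
  have hθccont : Continuous θc :=
    hθcont.comp_continuous (continuous_id.max continuous_const) (fun x => le_max_right x 0)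
  have hcoordc : ∀ k : Fin N ⊕ Fin N, Continuous (fun s => θc s k) := fun k =>
    ((PiLp.proj (𝕜 := ℝ) 2 (fun _ : Fin N ⊕ Fin N => ℝ) k).continuous).comp hθccont
  have hψc : ∀ i : Fin N, Continuous (fun s => psiOf p (θc s) i) := fun i =>
    (((cont_rpow_of_nonneg (by linarith : (0:ℝ) ≤ p)).comp (hcoordc (Sum.inl i))).sub
      (((cont_rpow_of_nonneg (by linarith : (0:ℝ) ≤ p)).comp (hcoordc (Sum.inr i)))))
  have hmv : ∀ (v : Fin N → ℝ) (j : Fin m), A.mulVec v j = ∑ i, A j i * v i := fun v j => by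
    simp [Matrix.mulVec, dotProduct]
  have hrc : ∀ j : Fin m, Continuous (fun s => A.mulVec (psiOf p (θc s)) j - y j) := by
    intro j
    have : (fun s => A.mulVec (psiOf p (θc s)) j - y j)
        = fun s => (∑ i, A j i * psiOf p (θc s) i) - y j := by
      funext s; rw [hmv]
    rw [this]
    exact (continuous_finset_sum _ fun i _ => continuous_const.mul (hψc i)).sub continuous_const
  set Cf : Fin N → ℝ → ℝ :=
    fun i s => ∑ j, A j i * (A.mulVec (psiOf p (θc s)) j - y j) with hCfdef
  have hCfc : ∀ i, Continuous (Cf i) := fun i =>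
    continuous_finset_sum _ fun j _ => continuous_const.mul (hrc j)
  -- coordinate derivatives of the flow
  have hcd : ∀ (k : Fin N ⊕ Fin N) (t' : ℝ), t' ∈ Set.Ici (0:ℝ) →
      HasDerivWithinAt (fun s => θc s k)
        (-(Sum.elim (fun i => p * θc t' (Sum.inl i) ^ (p - 1) * Cf i t')
            (fun i => -(p * θc t' (Sum.inr i) ^ (p - 1) * Cf i t')) k)) (Set.Ici 0) t' := by
    intro k t' ht'
    have hG := (loss_hasGradient A y hp (θ t')).gradient
    have h1 := hflow t' ht'
    rw [hG] at h1
    have h2 := (PiLp.proj (𝕜 := ℝ) 2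
      (fun _ : Fin N ⊕ Fin N => ℝ) k).hasFDerivAt.comp_hasDerivWithinAt t' h1
    have h3 := h2.congr (f₁ := fun s => θc s k)
      (fun x hx => by show θc x k = θ x k; rw [hθceq x hx])
      (by show θc t' k = θ t' k; rw [hθceq t' ht'])
    refine h3.congr_deriv ?_
    simp only [PiLp.proj_apply]
    rcases k with i | i <;> simp [hCfdef, hθceq t' ht']
  -- solve the ODE coordinatewise
  have h0l : ∀ i : Fin N, (fun s => θc s (Sum.inl i)) 0 = α := fun i => by
    show θc 0 (Sum.inl i) = α
    rw [hθceq 0 le_rfl]; exact hθ0 _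
  have h0r : ∀ i : Fin N, (fun s => θc s (Sum.inr i)) 0 = α := fun i => by
    show θc 0 (Sum.inr i) = α
    rw [hθceq 0 le_rfl]; exact hθ0 _
  have hpowl := fun i : Fin N =>
    coord_pow hp hα (hcoordc (Sum.inl i)) (hCfc i) (h0l i)
      (fun τ hτ => by simpa using hcd (Sum.inl i) τ hτ) htt'
  have hpowr := fun i : Fin N =>
    coord_pow (C := fun s => -(Cf i s)) hp hα (hcoordc (Sum.inr i)) (hCfc i).neg (h0r i)
      (fun τ hτ => by
        have h4 := hcd (Sum.inr i) τ hτ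
        convert h4 using 1
        simp) htt'
  set w : Fin N → ℝ := fun i => ∫ s in (0:ℝ)..t, Cf i s with hwdef
  set bp : ℝ := if p = 2 then (4:ℝ) else p * (p - 2) * α ^ (p - 2) with hbpdef
  set sv : Fin N → ℝ := fun i => -(bp * w i) with hsvdef
  have hψt : ∀ i, psiOf p (θ t) i = θc t (Sum.inl i) ^ p - θc t (Sum.inr i) ^ p := fun i => by
    rw [hθceq t htt]; rfl
  have hKey : ∀ i : Fin N, sv i ∈ hDomain p ∧ psiOf p (θ t) i = α ^ p * hfun p (sv i) := by
    intro i
    have hIneg : (∫ s in (0:ℝ)..t, -(Cf i s)) = -(w i) := by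
      rw [intervalIntegral.integral_neg]
    rcases eq_or_lt_of_le hp with h2 | h2
    · -- p = 2
      subst h2
      have hbp : bp = 4 := by rw [hbpdef]; simp
      have hEl : _ = α ^ (2:ℝ) * Real.exp (-(4 * w i)) := (hpowl i).2.1 rfl
      have hEr := (hpowr i).2.1 rfl
      rw [hIneg] at hEr
      have hsvi : sv i = -(4 * w i) := by simp only [hsvdef, hbp]
      constructor
      · rw [hDomain]; simp
      · rw [hψt i, hEl, hEr, show hfun 2 (sv i) = 2 * Real.sinh (sv i) from by simp [hfun],
          Real.sinh_eq, hsvi]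
        ring_nf
    · -- 2 < p
      have hne : ¬ p = 2 := by linarith
      have hbp : bp = p * (p - 2) * α ^ (p - 2) := by rw [hbpdef, if_neg hne]
      obtain ⟨hXl, hEl⟩ := (hpowl i).2.2 h2
      obtain ⟨hXr, hEr⟩ := (hpowr i).2.2 h2
      rw [hIneg] at hXr hEr
      have e1 : 1 + p * (p - 2) * α ^ (p - 2) * w i = 1 - sv i := by
        simp only [hsvdef, hbp]; ring
      have e2 : 1 + p * (p - 2) * α ^ (p - 2) * (-(w i)) = 1 + sv i := by
        simp only [hsvdef, hbp]; ring
      rw [e1] at hXl hEl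
      rw [e2] at hXr hEr
      constructor
      · rw [hDomain, if_neg hne]
        constructor <;> [linarith; linarith]
      · rw [hψt i, hEl, hEr, show hfun p (sv i)
            = (1 - sv i) ^ (-(p / (p - 2))) - (1 + sv i) ^ (-(p / (p - 2))) from by
          simp [hfun, hne]]
        ring
  -- orthogonality of sv to ker A differences
  set vv : Fin m → ℝ := fun j => ∫ s in (0:ℝ)..t, (A.mulVec (psiOf p (θc s)) j - y j) with hvvdef
  have hw : ∀ i, w i = ∑ j, A j i * vv j := by
    intro i
    rw [hwdef]
    simp only [hCfdef]
    rw [intervalIntegral.integral_finset_sum (f := fun j s => A j i * (A.mulVec (psiOf p (θc s)) j - y j))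
      (fun j _ => (continuous_const.mul (hrc j)).intervalIntegrable 0 t)]
    exact Finset.sum_congr rfl fun j _ => intervalIntegral.integral_const_mul _ _
  have horth : ∀ z : Fin N → ℝ, A.mulVec z = A.mulVec (psiOf p (θ t)) →
      (∑ i, sv i * (z i - psiOf p (θ t) i)) = 0 := by
    intro z hz
    have hAz : ∀ j, (∑ i, A j i * (z i - psiOf p (θ t) i)) = 0 := by
      intro j
      have h5 := congrFun hz j
      rw [hmv, hmv] at h5
      simp only [mul_sub, Finset.sum_sub_distrib]
      rw [h5, sub_self]
    calc (∑ i, sv i * (z i - psiOf p (θ t) i))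
        = ∑ i, ∑ j, (-(bp) * vv j) * (A j i * (z i - psiOf p (θ t) i)) := by
          refine Finset.sum_congr rfl fun i _ => ?_
          rw [show sv i = -(bp * ∑ j, A j i * vv j) from by
            simp only [hsvdef]; rw [hw i]]
          rw [Finset.mul_sum, ← Finset.sum_neg_distrib, Finset.sum_mul]
          exact Finset.sum_congr rfl fun j _ => by ring
      _ = ∑ j, (-(bp) * vv j) * (∑ i, A j i * (z i - psiOf p (θ t) i)) := by
          rw [Finset.sum_comm]
          exact Finset.sum_congr rfl fun j _ => (Finset.mul_sum _ _ _).symm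
      _ = 0 := by
          refine Finset.sum_eq_zero fun j _ => ?_
          rw [hAz j, mul_zero]
  -- translate hKey into the mirror characterization
  have hKey2 : ∀ i, hInv p (psiOf p (θ t) i / α ^ p) = sv i := by
    intro i
    have h6 : psiOf p (θ t) i / α ^ p = hfun p (sv i) := by
      rw [(hKey i).2]
      field_simp
    rw [h6, hInv_hfun hp (hKey i).1]
  -- main argument
  have hmain : ∀ z : Fin N → ℝ, A.mulVec z = A.mulVec (psiOf p (θ t)) →
      Qfun p α (psiOf p (θ t)) ≤ Qfun p α z
        ∧ (z ≠ psiOf p (θ t) → Qfun p α (psiOf p (θ t)) < Qfun p α z) := by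
    intro z hz
    have horth' := horth z hz
    have hlow : ∀ i, sv i * (z i / α ^ p - psiOf p (θ t) i / α ^ p)
        ≤ qfun p (z i / α ^ p) - qfun p (psiOf p (θ t) i / α ^ p) := fun i => by
      have h := (qfun_bregman hp (psiOf p (θ t) i / α ^ p) (z i / α ^ p)).1
      rwa [hKey2 i] at h
    have hstrict : ∀ i, z i ≠ psiOf p (θ t) i →
        sv i * (z i / α ^ p - psiOf p (θ t) i / α ^ p)
          < qfun p (z i / α ^ p) - qfun p (psiOf p (θ t) i / α ^ p) := fun i hne => by
      have hba : z i / α ^ p ≠ psiOf p (θ t) i / α ^ p := by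
        intro h
        apply hne
        have := congrArg (fun q => q * α ^ p) h
        simpa [div_mul_cancel₀, hae.ne'] using this
      have h := (qfun_bregman hp (psiOf p (θ t) i / α ^ p) (z i / α ^ p)).2 hba
      rwa [hKey2 i] at h
    have hsum : α ^ p * ∑ i, sv i * (z i / α ^ p - psiOf p (θ t) i / α ^ p)
        = ∑ i, sv i * (z i - psiOf p (θ t) i) := by
      rw [Finset.mul_sum]
      refine Finset.sum_congr rfl fun i _ => ?_
      field_simp
    have hQdiff : Qfun p α z - Qfun p α (psiOf p (θ t))
        = α ^ p * ∑ i, (qfun p (z i / α ^ p) - qfun p (psiOf p (θ t) i / α ^ p)) := by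
      simp only [Qfun]
      rw [← mul_sub, ← Finset.sum_sub_distrib]
    constructor
    · have h1 : ∑ i, sv i * (z i / α ^ p - psiOf p (θ t) i / α ^ p)
          ≤ ∑ i, (qfun p (z i / α ^ p) - qfun p (psiOf p (θ t) i / α ^ p)) :=
        Finset.sum_le_sum fun i _ => hlow i
      have h2 := mul_le_mul_of_nonneg_left h1 hae.le
      rw [hsum, horth'] at h2
      linarith [hQdiff, h2]
    · intro hne
      obtain ⟨i0, hi0⟩ : ∃ i, z i ≠ psiOf p (θ t) i := by
        by_contra h
        push_neg at h
        exact hne (funext h)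
      have h1 : ∑ i, sv i * (z i / α ^ p - psiOf p (θ t) i / α ^ p)
          < ∑ i, (qfun p (z i / α ^ p) - qfun p (psiOf p (θ t) i / α ^ p)) :=
        Finset.sum_lt_sum (fun i _ => hlow i) ⟨i0, Finset.mem_univ i0, hstrict i0 hi0⟩
      have h2 := mul_lt_mul_of_pos_left h1 hae
      rw [hsum, horth'] at h2
      linarith [hQdiff, h2]
  refine ⟨fun z hz => (hmain z hz).1, fun z hz hQ => ?_⟩
  by_contra hne
  exact absurd hQ (not_le.mpr ((hmain z hz).2 hne))
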